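/- Sufficient condition for singularity (diagonal condition): Let A_c, Δ ∈ ℝ^{n×n} with Δ ≥ 0 entrywise and A_c invertible. If max_j (|A_c^{-1}| Δ)_{jj} ≥ 1, i.e., some diagonal entry of the matrix |A_c^{-1}| Δ (where |A_c^{-1}| is the entrywise absolute value of A_c^{-1}) is at least 1, then there exists a non-invertible real matrix A with |A − A_c| ≤ Δ entrywise. -/

import Mathlib

open scoped Matrix


/-- Sufficient condition for singularity: if `A_c` is invertible and some
diagonal entry of `|A_c⁻¹| Δ` is at least `1`, then the interval matrix
`[A_c - Δ, A_c + Δ]` contains a non-invertible matrix. -/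
theorem singular_of_diagonal_condition {n : ℕ} (Ac Δ : Matrix (Fin n) (Fin n) ℝ)
    (hΔ : ∀ i j, 0 ≤ Δ i j) (hAc : IsUnit Ac)
    (h : ∃ j, 1 ≤ (((Ac⁻¹).map (fun r => |r|)) * Δ) j j) :
    ∃ A : Matrix (Fin n) (Fin n) ℝ, (∀ i j, |A i j - Ac i j| ≤ Δ i j) ∧ ¬ IsUnit A := by
  classical
  obtain ⟨j, hj⟩ := h
  have hdet : IsUnit Ac.det := (Matrix.isUnit_iff_isUnit_det Ac).mp hAc
  set B := Ac⁻¹ with hB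
  set s := ((B.map (fun r => |r|)) * Δ) j j with hs
  have hs1 : 1 ≤ s := hj
  have hspos : (0:ℝ) < s := lt_of_lt_of_le one_pos hs1
  set c : Fin n → ℝ := fun k => if 0 ≤ B j k then Δ k j else -(Δ k j) with hc
  have habs : ∀ k, |c k| = Δ k j := by
    intro k
    by_cases hk : 0 ≤ B j k
    · simp [hc, hk, abs_of_nonneg (hΔ k j)]
    · simp [hc, hk, abs_of_nonneg (hΔ k j)]
  have hmul : ∀ k, B j k * c k = |B j k| * Δ k j := by
    intro k
    by_cases hk : 0 ≤ B j k
    · simp [hc, hk, abs_of_nonneg hk]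
    · push_neg at hk
      simp only [hc, not_le.mpr hk, if_false, abs_of_neg hk]
      ring
  set v := B *ᵥ c with hv
  have hvj : v j = s := by
    simp only [hv, Matrix.mulVec, dotProduct, hs, Matrix.mul_apply,
      Matrix.map_apply]
    exact Finset.sum_congr rfl fun k _ => hmul k
  set E : Matrix (Fin n) (Fin n) ℝ := Matrix.of fun i l => if l = j then c i / s else 0
    with hE
  set A : Matrix (Fin n) (Fin n) ℝ := Ac - E with hA
  have hEv : E *ᵥ v = c := by
    funext i
    simp only [hE, Matrix.mulVec, dotProduct, Matrix.of_apply]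
    rw [Finset.sum_eq_single j]
    · rw [hvj]; field_simp; simp only [if_true]; field_simp
    · intro l _ hl; simp [hl]
    · intro habs'; exact absurd (Finset.mem_univ j) habs'
  have hAcv : Ac *ᵥ v = c := by
    rw [hv, Matrix.mulVec_mulVec, Matrix.mul_nonsing_inv Ac hdet, Matrix.one_mulVec]
  have hAv : A *ᵥ v = 0 := by
    rw [hA, Matrix.sub_mulVec, hAcv, hEv, sub_self]
  have hvne : v ≠ 0 := by
    intro h0
    have : v j = 0 := by rw [h0]; rfl
    rw [hvj] at this
    exact absurd this (ne_of_gt hspos)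
  refine ⟨A, ?_, ?_⟩
  · intro i l
    by_cases hl : l = j
    · rw [hl]
      have : |A i j - Ac i j| = Δ i j / s := by
        simp [hA, hE, abs_div, habs i, abs_of_pos hspos]
      rw [this]
      exact div_le_self (hΔ i j) hs1
    · simp [hA, hE, hl, hΔ i l]
  · intro hUnit
    have hdetA : IsUnit A.det := (Matrix.isUnit_iff_isUnit_det A).mp hUnit
    have : v = 0 := by
      have := congrArg (fun w => A⁻¹ *ᵥ w) hAv
      simpa [Matrix.mulVec_mulVec, Matrix.nonsing_inv_mul A hdetA,
        Matrix.one_mulVec] using this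
    exact hvne this
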